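/- Let k, k̃ : T → ℝ be bounded on T = {(x,ξ) : 0 ≤ ξ ≤ x ≤ 1} with ‖k̃‖_∞ ≤ ε, and let l, l̂ be continuous solutions on T of l(x,ξ) = k(x,ξ) + ∫_ξ^x k(x,s)l(s,ξ)ds and l̂(x,ξ) = (k+k̃)(x,ξ) + ∫_ξ^x (k+k̃)(x,s)l̂(s,ξ)ds respectively, with ‖k‖_∞ ≤ K. Then ‖l − l̂‖_∞ ≤ ε(1 + (K+ε)e^{K+ε}) e^{K}. -/

import Mathlib

open MeasureTheory Real Set Filter Topology

lemma gronwall_integral {f : ℝ → ℝ} {a b A C : ℝ} (hab : a ≤ b) (hA : 0 ≤ A) (hC : 0 ≤ C)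
    (hcont : ContinuousOn f (Icc a b)) (hnn : ∀ y ∈ Icc a b, 0 ≤ f y)
    (hineq : ∀ y ∈ Icc a b, f y ≤ A + C * ∫ s in a..y, f s) :
    ∀ y ∈ Icc a b, f y ≤ A * Real.exp (C * (y - a)) := by
  set c : ℝ → ℝ := fun y => max a (min y b) with hc
  have hcmem : ∀ y, c y ∈ Icc a b := fun y =>
    ⟨le_max_left _ _, max_le hab (min_le_right _ _)⟩
  have hccont : Continuous c := continuous_const.max (continuous_id.min continuous_const)
  set F : ℝ → ℝ := fun y => f (c y) with hF
  have hFcont : Continuous F := hcont.comp_continuous hccont hcmem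
  have hFeq : ∀ y ∈ Icc a b, F y = f y := by
    intro y hy
    simp only [hF, hc]
    rw [min_eq_left hy.2, max_eq_right hy.1]
  have hFnn : ∀ y, 0 ≤ F y := fun y => hnn _ (hcmem y)
  set g : ℝ → ℝ := fun y => ∫ s in a..y, F s with hg
  have hgderiv : ∀ y, HasDerivAt g (F y) y := fun y =>
    (hFcont.integral_hasStrictDerivAt a y).hasDerivAt
  have hgcont : ContinuousOn g (Icc a b) :=
    (fun y _ => (hgderiv y).continuousAt.continuousWithinAt)
  have hgnn : ∀ y ∈ Icc a b, 0 ≤ g y := by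
    intro y hy
    exact intervalIntegral.integral_nonneg hy.1 (fun u _ => hFnn u)
  have hginteq : ∀ y ∈ Icc a b, g y = ∫ s in a..y, f s := by
    intro y hy
    refine intervalIntegral.integral_congr (fun s hs => ?_)
    rw [uIcc_of_le hy.1] at hs
    exact hFeq s ⟨hs.1, hs.2.trans hy.2⟩
  have key : ∀ y ∈ Icc a b, ‖g y‖ ≤ gronwallBound 0 C A (y - a) := by
    refine norm_le_gronwallBound_of_norm_deriv_right_le hgcont
      (fun y _ => (hgderiv y).hasDerivWithinAt) ?_ ?_
    · simp [hg, intervalIntegral.integral_same]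
    · intro y hy
      have hy' : y ∈ Icc a b := ⟨hy.1, hy.2.le⟩
      have h1 : ‖F y‖ = f y := by rw [Real.norm_eq_abs, abs_of_nonneg (hFnn y), hFeq y hy']
      have h2 : ‖g y‖ = g y := by rw [Real.norm_eq_abs, abs_of_nonneg (hgnn y hy')]
      rw [h1, h2]
      calc f y ≤ A + C * ∫ s in a..y, f s := hineq y hy'
        _ = C * g y + A := by rw [hginteq y hy']; ring
  intro y hy
  have h3 : f y ≤ A + C * g y := by rw [hginteq y hy]; exact hineq y hy
  have h4 : g y ≤ gronwallBound 0 C A (y - a) := by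
    have := key y hy
    rwa [Real.norm_eq_abs, abs_of_nonneg (hgnn y hy)] at this
  rcases eq_or_lt_of_le hC with hC0 | hCpos
  · have : gronwallBound 0 C A = fun x => 0 + A * x := by rw [← hC0]; exact gronwallBound_K0 0 A
    calc f y ≤ A + C * g y := h3
      _ = A := by rw [← hC0]; ring
      _ ≤ A * Real.exp (C * (y - a)) := by
          nlinarith [Real.one_le_exp (mul_nonneg hC (sub_nonneg.2 hy.1))]
  · have hCne : C ≠ 0 := ne_of_gt hCpos
    rw [gronwallBound_of_K_ne_0 hCne] at h4
    simp only [zero_mul, zero_add] at h4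
    have hexp : 0 < Real.exp (C * (y - a)) := Real.exp_pos _
    calc f y ≤ A + C * g y := h3
      _ ≤ A + C * (A / C * (Real.exp (C * (y - a)) - 1)) :=
          by nlinarith
      _ = A * Real.exp (C * (y - a)) := by field_simp; ring

lemma kernel_integrable (κ u : ℝ → ℝ → ℝ) (Kb : ℝ)
    (hκ : ∀ x ξ : ℝ, 0 ≤ ξ → ξ ≤ x → x ≤ 1 → |κ x ξ| ≤ Kb)
    (hu : ContinuousOn (fun p : ℝ × ℝ => u p.1 p.2)
      {p : ℝ × ℝ | 0 ≤ p.2 ∧ p.2 ≤ p.1 ∧ p.1 ≤ 1})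
    (hequ : ∀ x ξ : ℝ, 0 ≤ ξ → ξ ≤ x → x ≤ 1 →
      u x ξ = κ x ξ + ∫ s in ξ..x, κ x s * u s ξ) :
    ∀ x ξ : ℝ, 0 ≤ ξ → ξ ≤ x → x ≤ 1 →
      IntervalIntegrable (fun s => κ x s * u s ξ) volume ξ x := by
  -- the triangle is compact
  set T : Set (ℝ × ℝ) := {p : ℝ × ℝ | 0 ≤ p.2 ∧ p.2 ≤ p.1 ∧ p.1 ≤ 1} with hTdef
  have hTclosed : IsClosed T := by
    have : T = {p : ℝ × ℝ | 0 ≤ p.2} ∩ ({p : ℝ × ℝ | p.2 ≤ p.1} ∩ {p : ℝ × ℝ | p.1 ≤ 1}) := by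
      ext p; simp [hTdef, and_assoc]
    rw [this]
    exact (isClosed_le continuous_const continuous_snd).inter
      ((isClosed_le continuous_snd continuous_fst).inter
        (isClosed_le continuous_fst continuous_const))
  have hTcompact : IsCompact T := by
    refine IsCompact.of_isClosed_subset (isCompact_Icc (a := ((0:ℝ),(0:ℝ))) (b := ((1:ℝ),(1:ℝ)))) hTclosed ?_
    rintro ⟨a, b⟩ ⟨h1, h2, h3⟩
    exact ⟨⟨le_trans h1 h2, h1⟩, ⟨h3, le_trans h2 h3⟩⟩
  obtain ⟨C, hC⟩ := hTcompact.exists_bound_of_continuousOn hu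
  have hCb : ∀ s η : ℝ, 0 ≤ η → η ≤ s → s ≤ 1 → |u s η| ≤ C := fun s η h1 h2 h3 => by
    have := hC (s, η) ⟨h1, h2, h3⟩
    rwa [Real.norm_eq_abs] at this
  have hC0 : 0 ≤ C := le_trans (abs_nonneg _) (hCb 0 0 le_rfl le_rfl zero_le_one)
  have hKb0 : 0 ≤ Kb := le_trans (abs_nonneg _) (hκ 0 0 le_rfl le_rfl zero_le_one)
  intro x ξ0 hξ00 hξ0x hx1
  have hx0 : 0 ≤ x := le_trans hξ00 hξ0x
  -- column/row continuity
  have hcol : ∀ η : ℝ, 0 ≤ η → η ≤ 1 → ContinuousOn (fun s => u s η) (Icc η 1) := by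
    intro η h0 h1
    have : ContinuousOn ((fun p : ℝ × ℝ => u p.1 p.2) ∘ (fun s => (s, η))) (Icc η 1) :=
      hu.comp (Continuous.continuousOn (by fun_prop)) (fun s hs => ⟨h0, hs.1, hs.2⟩)
    exact this
  have hrow : ContinuousOn (fun s => u x s) (Icc 0 x) := by
    have : ContinuousOn ((fun p : ℝ × ℝ => u p.1 p.2) ∘ (fun s => (x, s))) (Icc 0 x) :=
      hu.comp (Continuous.continuousOn (by fun_prop)) (fun s hs => ⟨hs.1, hs.2, hx1⟩)
    exact this
  set G : Set ℝ := {η : ℝ | η ∈ Icc 0 x ∧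
    IntervalIntegrable (fun s => κ x s * u s η) volume η x} with hGdef
  set J : ℝ → ℝ := fun η => ∫ s in η..x, κ x s * u s η with hJdef
  -- Step A : G is closed
  have hGclosed : IsClosed G := by
    refine IsSeqClosed.isClosed ?_
    intro ξn ξs hmem hlim
    have hξsIcc : ξs ∈ Icc 0 x :=
      isClosed_Icc.mem_of_tendsto hlim (Eventually.of_forall (fun n => (hmem n).1))
    refine ⟨hξsIcc, ?_⟩
    rw [intervalIntegrable_iff_integrableOn_Ioc_of_le hξsIcc.2]
    have haesm : AEStronglyMeasurable (fun s => κ x s * u s ξs)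
        (volume.restrict (Ioc ξs x)) := by
      set Gn : ℕ → ℝ → ℝ := fun n => (Ioc (max ξs (ξn n)) x).indicator
        (fun s => (κ x s * u s (ξn n)) * (u s ξs / u s (ξn n))) with hGn
      refine aestronglyMeasurable_of_tendsto_ae (f := Gn) atTop (fun n => ?_) ?_
      · -- each Gn is a.e. strongly measurable
        rw [hGn]
        rw [aestronglyMeasurable_indicator_iff measurableSet_Ioc,
          Measure.restrict_restrict measurableSet_Ioc,
          inter_eq_self_of_subset_left (Ioc_subset_Ioc (le_max_left _ _) le_rfl)]
        have hsub1 : Ioc (max ξs (ξn n)) x ⊆ Icc ξs 1 := fun s hs =>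
          ⟨le_trans (le_max_left _ _) hs.1.le, hs.2.trans hx1⟩
        have hsub2 : Ioc (max ξs (ξn n)) x ⊆ Icc (ξn n) 1 := fun s hs =>
          ⟨le_trans (le_max_right _ _) hs.1.le, hs.2.trans hx1⟩
        have h1 : AEStronglyMeasurable (fun s => κ x s * u s (ξn n))
            (volume.restrict (Ioc (max ξs (ξn n)) x)) := by
          have h := (hmem n).2
          rw [intervalIntegrable_iff_integrableOn_Ioc_of_le (hmem n).1.2] at h
          exact h.aestronglyMeasurable.mono_measure
            (Measure.restrict_mono (Ioc_subset_Ioc (le_max_right _ _) le_rfl) le_rfl)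
        have h2 : AEMeasurable (fun s => u s ξs)
            (volume.restrict (Ioc (max ξs (ξn n)) x)) :=
          ((hcol ξs hξsIcc.1 (hξsIcc.2.trans hx1)).aemeasurable measurableSet_Icc).mono_measure
            (Measure.restrict_mono hsub1 le_rfl)
        have h3 : AEMeasurable (fun s => u s (ξn n))
            (volume.restrict (Ioc (max ξs (ξn n)) x)) :=
          ((hcol (ξn n) (hmem n).1.1 ((hmem n).1.2.trans hx1)).aemeasurable
            measurableSet_Icc).mono_measure (Measure.restrict_mono hsub2 le_rfl)
        exact h1.mul (h2.div h3).aestronglyMeasurable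
      · -- a.e. pointwise convergence
        rw [ae_restrict_iff' measurableSet_Ioc]
        refine Eventually.of_forall (fun s hs => ?_)
        have hξss : ξs < s := hs.1
        by_cases h0 : u s ξs = 0
        · have hzero : ∀ n, Gn n s = 0 := by
            intro n
            by_cases hmem' : s ∈ Ioc (max ξs (ξn n)) x
            · simp [hGn, Set.indicator_of_mem hmem', h0]
            · simp [hGn, Set.indicator_of_notMem hmem']
          simp only [hzero, h0, mul_zero]
          exact tendsto_const_nhds
        · have htend : Tendsto (fun n => u s (ξn n)) atTop (𝓝 (u s ξs)) := by
            have hpair : Tendsto (fun n => ((s, ξn n) : ℝ × ℝ)) atTop (𝓝 (s, ξs)) :=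
              tendsto_const_nhds.prodMk_nhds hlim
            have hev : ∀ᶠ n in atTop, ((s, ξn n) : ℝ × ℝ) ∈ T := by
              filter_upwards [hlim.eventually_lt_const hξss] with n hn
              exact ⟨(hmem n).1.1, hn.le, hs.2.trans hx1⟩
            exact ((hu (s, ξs) ⟨hξsIcc.1, hξss.le, hs.2.trans hx1⟩).tendsto.comp
              (tendsto_nhdsWithin_of_tendsto_nhds_of_eventually_within _ hpair hev))
          have hev1 : ∀ᶠ n in atTop, ξn n < s := hlim.eventually_lt_const hξss
          have hev2 : ∀ᶠ n in atTop, u s (ξn n) ≠ 0 := htend.eventually (eventually_ne_nhds h0)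
          refine Tendsto.congr' ?_ tendsto_const_nhds
          filter_upwards [hev1, hev2] with n h1 h2
          have hsmem : s ∈ Ioc (max ξs (ξn n)) x := ⟨max_lt hξss h1, hs.2⟩
          simp only [hGn, Set.indicator_of_mem hsmem]
          field_simp
    refine Integrable.mono' (g := fun _ : ℝ => Kb * C) (integrableOn_const measure_Ioc_lt_top.ne) haesm ?_
    rw [ae_restrict_iff' measurableSet_Ioc]
    refine Eventually.of_forall (fun s hs => ?_)
    have h1 : |κ x s| ≤ Kb := hκ x s (le_trans hξsIcc.1 hs.1.le) hs.2 hx1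
    have h2 : |u s ξs| ≤ C := hCb s ξs hξsIcc.1 hs.1.le (hs.2.trans hx1)
    rw [Real.norm_eq_abs, abs_mul]
    exact mul_le_mul h1 h2 (abs_nonneg _) hKb0
  -- Step B : J is continuous on G
  have hJcont : ContinuousOn J G := by
    have hunif := Metric.uniformContinuousOn_iff.1
      (hTcompact.uniformContinuousOn_of_continuous hu)
    intro etas hetas
    rw [Metric.continuousWithinAt_iff]
    intro eps heps
    set Q : ℝ := Kb * C + Kb + 1 with hQdef
    have hQpos : 0 < Q := by positivity
    have hhalf : 0 < eps / (2 * Q) := by positivity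
    obtain ⟨d1, hd1, hP1⟩ := hunif (eps / (2 * Q)) hhalf
    set d : ℝ := min d1 (eps / (2 * Q)) with hddef
    have hdpos : 0 < d := lt_min hd1 hhalf
    have aux : ∀ e1 ∈ G, ∀ e2 ∈ G, e1 ≤ e2 → |e2 - e1| < d → |J e1 - J e2| < eps := by
      intro e1 he1 e2 he2 hle hclose
      have he1x : e1 ≤ x := he1.1.2
      have he2x : e2 ≤ x := he2.1.2
      have ha : IntervalIntegrable (fun s => κ x s * u s e1) volume e1 e2 :=
        he1.2.mono_set (by rw [uIcc_of_le hle, uIcc_of_le he1x]; exact Icc_subset_Icc le_rfl he2x)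
      have hb : IntervalIntegrable (fun s => κ x s * u s e1) volume e2 x :=
        he1.2.mono_set (by rw [uIcc_of_le he2x, uIcc_of_le he1x]; exact Icc_subset_Icc hle le_rfl)
      have hJJ : J e1 - J e2 = (∫ s in e1..e2, κ x s * u s e1)
          + ∫ s in e2..x, (κ x s * u s e1 - κ x s * u s e2) := by
        rw [intervalIntegral.integral_sub hb he2.2]
        simp only [hJdef]
        rw [← intervalIntegral.integral_add_adjacent_intervals ha hb]
        ring
      have hbnd1 : ‖∫ s in e1..e2, κ x s * u s e1‖ ≤ (Kb * C) * |e2 - e1| := by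
        refine intervalIntegral.norm_integral_le_of_norm_le_const (fun s hs => ?_)
        rw [uIoc_of_le hle] at hs
        have hk1 : |κ x s| ≤ Kb := hκ x s (le_trans he1.1.1 hs.1.le) (hs.2.trans he2x) hx1
        have hu1 : |u s e1| ≤ C := hCb s e1 he1.1.1 hs.1.le ((hs.2.trans he2x).trans hx1)
        rw [Real.norm_eq_abs, abs_mul]
        exact mul_le_mul hk1 hu1 (abs_nonneg _) hKb0
      have hbnd2 : ‖∫ s in e2..x, (κ x s * u s e1 - κ x s * u s e2)‖
          ≤ (Kb * (eps / (2 * Q))) * |x - e2| := by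
        refine intervalIntegral.norm_integral_le_of_norm_le_const (fun s hs => ?_)
        rw [uIoc_of_le he2x] at hs
        have hk1 : |κ x s| ≤ Kb := hκ x s (le_trans he2.1.1 hs.1.le) hs.2 hx1
        have hs1 : s ≤ 1 := hs.2.trans hx1
        have hdist : dist (u s e1) (u s e2) < eps / (2 * Q) := by
          have hm1 : ((s, e1) : ℝ × ℝ) ∈ T := ⟨he1.1.1, le_trans hle hs.1.le, hs1⟩
          have hm2 : ((s, e2) : ℝ × ℝ) ∈ T := ⟨he2.1.1, hs.1.le, hs1⟩
          have hdd : dist ((s, e1) : ℝ × ℝ) ((s, e2) : ℝ × ℝ) < d1 := by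
            rw [Prod.dist_eq]
            simp only [dist_self, Real.dist_eq]
            have : |e1 - e2| < d1 := by
              rw [abs_sub_comm]; exact hclose.trans_le (min_le_left _ _)
            simpa [this] using lt_of_le_of_lt (max_le (le_of_eq rfl) le_rfl) this
          exact hP1 (s, e1) hm1 (s, e2) hm2 hdd
        rw [Real.norm_eq_abs, ← mul_sub, abs_mul]
        have := le_of_lt hdist
        rw [Real.dist_eq] at this
        exact mul_le_mul hk1 this (abs_nonneg _) hKb0
      have habs : |J e1 - J e2| ≤ (Kb * C) * |e2 - e1| + (Kb * (eps / (2 * Q))) * |x - e2| := by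
        rw [hJJ]
        calc |(∫ s in e1..e2, κ x s * u s e1)
            + ∫ s in e2..x, (κ x s * u s e1 - κ x s * u s e2)|
            ≤ |∫ s in e1..e2, κ x s * u s e1|
              + |∫ s in e2..x, (κ x s * u s e1 - κ x s * u s e2)| := abs_add_le _ _
          _ ≤ (Kb * C) * |e2 - e1| + (Kb * (eps / (2 * Q))) * |x - e2| := by
              refine add_le_add ?_ ?_
              · simpa [Real.norm_eq_abs] using hbnd1
              · simpa [Real.norm_eq_abs] using hbnd2
      have hxe2 : |x - e2| ≤ 1 := by
        rw [abs_of_nonneg (sub_nonneg.2 he2x)]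
        have := he2.1.1
        linarith
      have hce : |e2 - e1| ≤ eps / (2 * Q) := le_of_lt (hclose.trans_le (min_le_right _ _))
      have habs2 : |J e1 - J e2| ≤ (Kb * C + Kb) * (eps / (2 * Q)) := by
        calc |J e1 - J e2| ≤ (Kb * C) * |e2 - e1| + (Kb * (eps / (2 * Q))) * |x - e2| := habs
          _ ≤ (Kb * C) * (eps / (2 * Q)) + (Kb * (eps / (2 * Q))) * 1 := by
              refine add_le_add (mul_le_mul_of_nonneg_left hce (by positivity)) ?_
              exact mul_le_mul_of_nonneg_left hxe2 (by positivity)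
          _ = (Kb * C + Kb) * (eps / (2 * Q)) := by ring
      calc |J e1 - J e2| ≤ (Kb * C + Kb) * (eps / (2 * Q)) := habs2
        _ < eps := by
            rw [div_eq_mul_inv]
            have h1 : Kb * C + Kb < Q := by rw [hQdef]; linarith
            have h2 : (0:ℝ) < (2 * Q)⁻¹ := by positivity
            calc (Kb * C + Kb) * (eps * (2 * Q)⁻¹) < Q * (eps * (2 * Q)⁻¹) := by
                  refine mul_lt_mul_of_pos_right h1 (by positivity)
              _ = eps / 2 := by field_simp
              _ < eps := by linarith
    refine ⟨d, hdpos, fun eta heta hdlt => ?_⟩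
    rcases le_total eta etas with hle | hle
    · have := aux eta heta etas hetas hle (by rw [Real.dist_eq] at hdlt; rwa [abs_sub_comm])
      rwa [Real.dist_eq]
    · have := aux etas hetas eta heta hle (by rwa [Real.dist_eq] at hdlt)
      rw [Real.dist_eq, abs_sub_comm]
      exact this
  -- Step C : every point of Icc 0 x is good
  have main : ∀ η ∈ Icc 0 x, IntervalIntegrable (fun s => κ x s * u s η) volume η x := by
    intro η hη
    rw [intervalIntegrable_iff_integrableOn_Ioc_of_le hη.2]
    have hGmeas : MeasurableSet G := hGclosed.measurableSet
    have hcolη : ContinuousOn (fun s => u s η) (Icc η 1) := hcol η hη.1 (hη.2.trans hx1)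
    have haesm : AEStronglyMeasurable (fun s => κ x s * u s η)
        (volume.restrict (Ioc η x)) := by
      have hS1 : AEStronglyMeasurable (fun s => κ x s * u s η)
          (volume.restrict (Ioc η x ∩ G)) := by
        have hmeasS1 : MeasurableSet (Ioc η x ∩ G) := measurableSet_Ioc.inter hGmeas
        have hsubIcc : Ioc η x ∩ G ⊆ Icc 0 x := fun s hs => ⟨le_trans hη.1 hs.1.1.le, hs.1.2⟩
        have hsubIccη : Ioc η x ∩ G ⊆ Icc η 1 := fun s hs => ⟨hs.1.1.le, hs.1.2.trans hx1⟩
        have hJm : AEMeasurable J (volume.restrict (Ioc η x ∩ G)) :=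
          (hJcont.aemeasurable hGmeas).mono_measure
            (Measure.restrict_mono inter_subset_right le_rfl)
        have hrowm : AEMeasurable (fun s => u x s) (volume.restrict (Ioc η x ∩ G)) :=
          (hrow.aemeasurable measurableSet_Icc).mono_measure
            (Measure.restrict_mono hsubIcc le_rfl)
        have hcolm : AEMeasurable (fun s => u s η) (volume.restrict (Ioc η x ∩ G)) :=
          (hcolη.aemeasurable measurableSet_Icc).mono_measure
            (Measure.restrict_mono hsubIccη le_rfl)
        refine AEStronglyMeasurable.congr
          (((hrowm.sub hJm).mul hcolm).aestronglyMeasurable) ?_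
        filter_upwards [ae_restrict_mem hmeasS1] with s hs
        have h0s : 0 ≤ s := le_trans hη.1 hs.1.1.le
        have hsx : s ≤ x := hs.1.2
        have heq := hequ x s h0s hsx hx1
        simp only [hJdef, Pi.mul_apply, Pi.sub_apply]
        rw [heq]
        ring
      have hS2 : AEStronglyMeasurable (fun s => κ x s * u s η)
          (volume.restrict (Ioc η x \ G)) := by
        have hmeasS2 : MeasurableSet (Ioc η x \ G) := measurableSet_Ioc.diff hGmeas
        have hsubIcc : Ioc η x \ G ⊆ Icc 0 x := fun s hs => ⟨le_trans hη.1 hs.1.1.le, hs.1.2⟩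
        have hsubIccη : Ioc η x \ G ⊆ Icc η 1 := fun s hs => ⟨hs.1.1.le, hs.1.2.trans hx1⟩
        have hrowm : AEMeasurable (fun s => u x s) (volume.restrict (Ioc η x \ G)) :=
          (hrow.aemeasurable measurableSet_Icc).mono_measure
            (Measure.restrict_mono hsubIcc le_rfl)
        have hcolm : AEMeasurable (fun s => u s η) (volume.restrict (Ioc η x \ G)) :=
          (hcolη.aemeasurable measurableSet_Icc).mono_measure
            (Measure.restrict_mono hsubIccη le_rfl)
        refine AEStronglyMeasurable.congr ((hrowm.mul hcolm).aestronglyMeasurable) ?_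
        filter_upwards [ae_restrict_mem hmeasS2] with s hs
        have h0s : 0 ≤ s := le_trans hη.1 hs.1.1.le
        have hsx : s ≤ x := hs.1.2
        have hnot : ¬ IntervalIntegrable (fun r => κ x r * u r s) volume s x := by
          intro hint
          exact hs.2 ⟨⟨h0s, hsx⟩, hint⟩
        have hJ0 : (∫ r in s..x, κ x r * u r s) = 0 := intervalIntegral.integral_undef hnot
        have heq := hequ x s h0s hsx hx1
        rw [hJ0, add_zero] at heq
        rw [← heq]
        rfl
      have hle : volume.restrict (Ioc η x)
          ≤ volume.restrict (Ioc η x ∩ G) + volume.restrict (Ioc η x \ G) := by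
        have := Measure.restrict_union_le (μ := volume) (Ioc η x ∩ G) (Ioc η x \ G)
        rwa [inter_union_diff] at this
      exact (hS1.add_measure hS2).mono_measure hle
    refine Integrable.mono' (g := fun _ : ℝ => Kb * C)
      (integrableOn_const measure_Ioc_lt_top.ne) haesm ?_
    rw [ae_restrict_iff' measurableSet_Ioc]
    refine Eventually.of_forall (fun s hs => ?_)
    have h1 : |κ x s| ≤ Kb := hκ x s (le_trans hη.1 hs.1.le) hs.2 hx1
    have h2 : |u s η| ≤ C := hCb s η hη.1 hs.1.le (hs.2.trans hx1)
    rw [Real.norm_eq_abs, abs_mul]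
    exact mul_le_mul h1 h2 (abs_nonneg _) hKb0
  exact main ξ0 ⟨hξ00, hξ0x⟩

lemma solution_bound (κ u : ℝ → ℝ → ℝ) (Kb : ℝ)
    (hκ : ∀ x ξ : ℝ, 0 ≤ ξ → ξ ≤ x → x ≤ 1 → |κ x ξ| ≤ Kb)
    (hu : ContinuousOn (fun p : ℝ × ℝ => u p.1 p.2)
      {p : ℝ × ℝ | 0 ≤ p.2 ∧ p.2 ≤ p.1 ∧ p.1 ≤ 1})
    (hequ : ∀ x ξ : ℝ, 0 ≤ ξ → ξ ≤ x → x ≤ 1 →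
      u x ξ = κ x ξ + ∫ s in ξ..x, κ x s * u s ξ) :
    ∀ x ξ : ℝ, 0 ≤ ξ → ξ ≤ x → x ≤ 1 → |u x ξ| ≤ Kb * Real.exp Kb := by
  have hKb0 : 0 ≤ Kb := le_trans (abs_nonneg _) (hκ 0 0 le_rfl le_rfl zero_le_one)
  intro x ξ h0 hξx hx1
  have hξ1 : ξ ≤ 1 := hξx.trans hx1
  have hint := kernel_integrable κ u Kb hκ hu hequ
  have hcolξ : ContinuousOn (fun y => u y ξ) (Icc ξ 1) := by
    have : ContinuousOn ((fun p : ℝ × ℝ => u p.1 p.2) ∘ (fun y => (y, ξ))) (Icc ξ 1) :=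
      hu.comp (Continuous.continuousOn (by fun_prop)) (fun y hy => ⟨h0, hy.1, hy.2⟩)
    exact this
  have hcont : ContinuousOn (fun y => |u y ξ|) (Icc ξ 1) := hcolξ.abs
  have hineq : ∀ y ∈ Icc ξ 1, |u y ξ| ≤ Kb + Kb * ∫ s in ξ..y, |u s ξ| := by
    intro y hy
    have heq := hequ y ξ h0 hy.1 hy.2
    have hiy : IntervalIntegrable (fun s => κ y s * u s ξ) volume ξ y := hint y ξ h0 hy.1 hy.2
    have hrhsint : IntervalIntegrable (fun s => Kb * |u s ξ|) volume ξ y := by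
      refine ContinuousOn.intervalIntegrable ?_
      rw [uIcc_of_le hy.1]
      exact (continuousOn_const.mul ((hcolξ.mono (Icc_subset_Icc le_rfl hy.2)).abs))
    calc |u y ξ| = |κ y ξ + ∫ s in ξ..y, κ y s * u s ξ| := by rw [← heq]
      _ ≤ |κ y ξ| + |∫ s in ξ..y, κ y s * u s ξ| := abs_add_le _ _
      _ ≤ Kb + ∫ s in ξ..y, |κ y s * u s ξ| :=
          add_le_add (hκ y ξ h0 hy.1 hy.2) (intervalIntegral.abs_integral_le_integral_abs hy.1)
      _ ≤ Kb + ∫ s in ξ..y, Kb * |u s ξ| := by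
          refine add_le_add le_rfl ?_
          refine intervalIntegral.integral_mono_on hy.1 hiy.abs hrhsint (fun s hs => ?_)
          rw [abs_mul]
          exact mul_le_mul_of_nonneg_right
            (hκ y s (le_trans h0 hs.1) hs.2 hy.2) (abs_nonneg _)
      _ = Kb + Kb * ∫ s in ξ..y, |u s ξ| := by rw [intervalIntegral.integral_const_mul]
  have hg := gronwall_integral hξ1 hKb0 hKb0 hcont (fun y _ => abs_nonneg _) hineq x ⟨hξx, hx1⟩
  calc |u x ξ| ≤ Kb * Real.exp (Kb * (x - ξ)) := hg
    _ ≤ Kb * Real.exp Kb :=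
        mul_le_mul_of_nonneg_left (Real.exp_le_exp.2 (by nlinarith)) hKb0

theorem resolvent_perturbation_stability
    (k ktil l lhat : ℝ → ℝ → ℝ) (ε K : ℝ)
    (hktil : ∀ x ξ : ℝ, 0 ≤ ξ → ξ ≤ x → x ≤ 1 → |ktil x ξ| ≤ ε)
    (hk : ∀ x ξ : ℝ, 0 ≤ ξ → ξ ≤ x → x ≤ 1 → |k x ξ| ≤ K)
    (hl : ContinuousOn (fun p : ℝ × ℝ => l p.1 p.2)
      {p : ℝ × ℝ | 0 ≤ p.2 ∧ p.2 ≤ p.1 ∧ p.1 ≤ 1})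
    (hlhat : ContinuousOn (fun p : ℝ × ℝ => lhat p.1 p.2)
      {p : ℝ × ℝ | 0 ≤ p.2 ∧ p.2 ≤ p.1 ∧ p.1 ≤ 1})
    (heql : ∀ x ξ : ℝ, 0 ≤ ξ → ξ ≤ x → x ≤ 1 →
      l x ξ = k x ξ + ∫ s in ξ..x, k x s * l s ξ)
    (heqlhat : ∀ x ξ : ℝ, 0 ≤ ξ → ξ ≤ x → x ≤ 1 →
      lhat x ξ = (k x ξ + ktil x ξ) + ∫ s in ξ..x, (k x s + ktil x s) * lhat s ξ) :
    ∀ x ξ : ℝ, 0 ≤ ξ → ξ ≤ x → x ≤ 1 →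
      |l x ξ - lhat x ξ| ≤ ε * (1 + (K + ε) * Real.exp (K + ε)) * Real.exp K := by
  have hε0 : 0 ≤ ε := le_trans (abs_nonneg _) (hktil 0 0 le_rfl le_rfl zero_le_one)
  have hK0 : 0 ≤ K := le_trans (abs_nonneg _) (hk 0 0 le_rfl le_rfl zero_le_one)
  set κ2 : ℝ → ℝ → ℝ := fun a b => k a b + ktil a b with hκ2
  have hκ2b : ∀ x ξ : ℝ, 0 ≤ ξ → ξ ≤ x → x ≤ 1 → |κ2 x ξ| ≤ K + ε := fun x ξ h1 h2 h3 =>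
    le_trans (abs_add_le _ _) (add_le_add (hk x ξ h1 h2 h3) (hktil x ξ h1 h2 h3))
  have heqlhat2 : ∀ x ξ : ℝ, 0 ≤ ξ → ξ ≤ x → x ≤ 1 →
      lhat x ξ = κ2 x ξ + ∫ s in ξ..x, κ2 x s * lhat s ξ := heqlhat
  set M : ℝ := (K + ε) * Real.exp (K + ε) with hM
  have hM0 : 0 ≤ M := by positivity
  have hbnd : ∀ x ξ : ℝ, 0 ≤ ξ → ξ ≤ x → x ≤ 1 → |lhat x ξ| ≤ M :=
    solution_bound κ2 lhat (K + ε) hκ2b hlhat heqlhat2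
  have hint1 := kernel_integrable k l K hk hl heql
  have hint2 := kernel_integrable κ2 lhat (K + ε) hκ2b hlhat heqlhat2
  intro x ξ h0 hξx hx1
  have hξ1 : ξ ≤ 1 := hξx.trans hx1
  have hcoll : ContinuousOn (fun y => l y ξ) (Icc ξ 1) := by
    have : ContinuousOn ((fun p : ℝ × ℝ => l p.1 p.2) ∘ (fun y => (y, ξ))) (Icc ξ 1) :=
      hl.comp (Continuous.continuousOn (by fun_prop)) (fun y hy => ⟨h0, hy.1, hy.2⟩)
    exact this
  have hcollh : ContinuousOn (fun y => lhat y ξ) (Icc ξ 1) := by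
    have : ContinuousOn ((fun p : ℝ × ℝ => lhat p.1 p.2) ∘ (fun y => (y, ξ))) (Icc ξ 1) :=
      hlhat.comp (Continuous.continuousOn (by fun_prop)) (fun y hy => ⟨h0, hy.1, hy.2⟩)
    exact this
  have hcont : ContinuousOn (fun y => |l y ξ - lhat y ξ|) (Icc ξ 1) := (hcoll.sub hcollh).abs
  have hineq : ∀ y ∈ Icc ξ 1, |l y ξ - lhat y ξ|
      ≤ ε * (1 + M) + K * ∫ s in ξ..y, |l s ξ - lhat s ξ| := by
    intro y hy
    have h1 := hint1 y ξ h0 hy.1 hy.2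
    have h2 := hint2 y ξ h0 hy.1 hy.2
    have hfint : IntervalIntegrable (fun s => |l s ξ - lhat s ξ|) volume ξ y := by
      refine ContinuousOn.intervalIntegrable ?_
      rw [uIcc_of_le hy.1]
      exact hcont.mono (Icc_subset_Icc le_rfl hy.2)
    have hrhsint : IntervalIntegrable (fun s => K * |l s ξ - lhat s ξ| + ε * M) volume ξ y :=
      (hfint.const_mul K).add (intervalIntegrable_const)
    have heq : l y ξ - lhat y ξ = -(ktil y ξ)
        + ∫ s in ξ..y, (k y s * l s ξ - κ2 y s * lhat s ξ) := by
      rw [intervalIntegral.integral_sub h1 h2, heql y ξ h0 hy.1 hy.2,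
        heqlhat2 y ξ h0 hy.1 hy.2]
      simp only [hκ2]
      ring
    calc |l y ξ - lhat y ξ|
        ≤ |ktil y ξ| + |∫ s in ξ..y, (k y s * l s ξ - κ2 y s * lhat s ξ)| := by
          rw [heq]; exact le_trans (abs_add_le _ _) (by rw [abs_neg])
      _ ≤ ε + ∫ s in ξ..y, |k y s * l s ξ - κ2 y s * lhat s ξ| :=
          add_le_add (hktil y ξ h0 hy.1 hy.2)
            (intervalIntegral.abs_integral_le_integral_abs hy.1)
      _ ≤ ε + ∫ s in ξ..y, (K * |l s ξ - lhat s ξ| + ε * M) := by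
          refine add_le_add le_rfl ?_
          refine intervalIntegral.integral_mono_on hy.1 (h1.sub h2).abs hrhsint (fun s hs => ?_)
          have hs0 : 0 ≤ s := le_trans h0 hs.1
          have hdiff : k y s * l s ξ - κ2 y s * lhat s ξ
              = k y s * (l s ξ - lhat s ξ) - ktil y s * lhat s ξ := by
            simp only [hκ2]; ring
          rw [hdiff]
          calc |k y s * (l s ξ - lhat s ξ) - ktil y s * lhat s ξ|
              ≤ |k y s * (l s ξ - lhat s ξ)| + |ktil y s * lhat s ξ| := abs_sub _ _
            _ ≤ K * |l s ξ - lhat s ξ| + ε * M := by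
                rw [abs_mul, abs_mul]
                refine add_le_add
                  (mul_le_mul_of_nonneg_right (hk y s hs0 hs.2 hy.2) (abs_nonneg _))
                  (mul_le_mul (hktil y s hs0 hs.2 hy.2)
                    (hbnd s ξ h0 hs.1 (hs.2.trans hy.2)) (abs_nonneg _) hε0)
      _ = ε + (K * ∫ s in ξ..y, |l s ξ - lhat s ξ|) + ε * M * (y - ξ) := by
          rw [intervalIntegral.integral_add (hfint.const_mul K) intervalIntegrable_const,
            intervalIntegral.integral_const_mul, intervalIntegral.integral_const]
          simp [smul_eq_mul]
          ring
      _ ≤ ε * (1 + M) + K * ∫ s in ξ..y, |l s ξ - lhat s ξ| := by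
          have hyb : y - ξ ≤ 1 := by
            have := hy.2; linarith
          nlinarith [mul_nonneg hε0 hM0, mul_nonneg (mul_nonneg hε0 hM0) (sub_nonneg.2 hy.1)]
  have hg := gronwall_integral hξ1 (by positivity) hK0 hcont (fun y _ => abs_nonneg _)
    hineq x ⟨hξx, hx1⟩
  calc |l x ξ - lhat x ξ| ≤ ε * (1 + M) * Real.exp (K * (x - ξ)) := hg
    _ ≤ ε * (1 + M) * Real.exp K := by
        refine mul_le_mul_of_nonneg_left (Real.exp_le_exp.2 ?_) (by positivity)
        nlinarith
    _ = ε * (1 + (K + ε) * Real.exp (K + ε)) * Real.exp K := by rw [hM]
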